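/- With pivot derivations v_i as above, for all 1 ≤ i < j one has [v_i, v_j] = t_{i−1} t_i ⋯ t_{j−3} v_{j+1}, where the product of t's is interpreted as 1 when i − 1 > j − 3. -/

import Mathlib

open MvPolynomial

section PivotAux

variable {K : Type*} [Field K]

private lemma pivot_keyzero (p : MvPolynomial ℕ K) (a : ℕ)
    (h : ∀ m : ℕ, ∃ q, p = (∏ k ∈ Finset.Ico a (a + m), X k) * q) : p = 0 := by
  by_contra hp
  set k := max a (p.vars.sup id + 1) with hk
  have hak : a ≤ k := le_max_left _ _
  have hkvars : k ∉ p.vars := by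
    intro hmem
    have h1 : id k ≤ p.vars.sup id := Finset.le_sup hmem
    have h2 : p.vars.sup id + 1 ≤ k := le_max_right _ _
    simp only [id] at h1
    omega
  obtain ⟨q, hq⟩ := h (k + 1 - a)
  rw [show a + (k + 1 - a) = k + 1 by omega, Finset.prod_Ico_succ_top hak] at hq
  have hq' : p = ((∏ k' ∈ Finset.Ico a k, X k') * q) * X k := by rw [hq]; ring
  have hne : (∏ k' ∈ Finset.Ico a k, X k') * q ≠ 0 := by
    intro h0; rw [h0, zero_mul] at hq'; exact hp hq'
  have hdeg : 1 ≤ degreeOf k p := by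
    rw [hq', (degreeOf_mul_X_eq_degreeOf_add_one_iff k _).mpr hne]; omega
  have hnd : ¬ degreeOf k p < 1 := by omega
  rw [degreeOf_lt_iff Nat.one_pos] at hnd
  push_neg at hnd
  obtain ⟨m, hm, hm1⟩ := hnd
  exact hkvars ((mem_vars k).mpr ⟨m, hm, Finsupp.mem_support_iff.mpr (by omega)⟩)

variable (v : ℕ → Derivation K (MvPolynomial ℕ K) (MvPolynomial ℕ K))
    (hv : ∀ i, 1 ≤ i → ∀ j : ℕ,
      v i (X j) = (if i = j then 1 else 0) + X (i - 1) * v (i + 1) (X j))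

include hv

private lemma pivot_vX_zero {j n : ℕ} (hj : 1 ≤ j) (hn : n < j) : v j (X n) = 0 := by
  have key : ∀ m, v j (X n)
      = (∏ k ∈ Finset.Ico (j - 1) (j - 1 + m), X k) * v (j + m) (X n) := by
    intro m
    induction m with
    | zero => simp
    | succ m ih =>
      rw [ih, hv (j + m) (by omega) n, if_neg (by omega),
        show j - 1 + (m + 1) = j - 1 + m + 1 from rfl,
        Finset.prod_Ico_succ_top (by omega : j - 1 ≤ j - 1 + m),
        show j + m - 1 = j - 1 + m by omega, show j + (m + 1) = j + m + 1 from rfl]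
      ring
  exact pivot_keyzero _ (j - 1) fun m => ⟨_, key m⟩

private lemma pivot_pderiv_v {i j : ℕ} (hij : i + 2 ≤ j) (n : ℕ) :
    pderiv i (v j (X n)) = 0 := by
  have key : ∀ m, pderiv i (v j (X n))
      = (∏ k ∈ Finset.Ico (j - 1) (j - 1 + m), X k) * pderiv i (v (j + m) (X n)) := by
    intro m
    induction m with
    | zero => simp
    | succ m ih =>
      have hvjm := hv (j + m) (by omega) n
      have hd : pderiv i (v (j + m) (X n))
          = X (j + m - 1) * pderiv i (v (j + m + 1) (X n)) := by
        rw [hvjm, map_add]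
        have h0 : pderiv i ((if j + m = n then 1 else 0 : MvPolynomial ℕ K)) = 0 := by
          split_ifs
          · exact pderiv_one
          · exact map_zero _
        rw [h0, zero_add, Derivation.leibniz, smul_eq_mul, smul_eq_mul,
          pderiv_X_of_ne (by omega : j + m - 1 ≠ i)]
        ring
      rw [ih, hd, show j - 1 + (m + 1) = j - 1 + m + 1 from rfl,
        Finset.prod_Ico_succ_top (by omega : j - 1 ≤ j - 1 + m),
        show j + m - 1 = j - 1 + m by omega, show j + (m + 1) = j + m + 1 from rfl]
      ring
  exact pivot_keyzero _ (j - 1) fun m => ⟨_, key m⟩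

private lemma pivot_v_eq {i : ℕ} (hi : 1 ≤ i) :
    v i = pderiv i + (X (i - 1) : MvPolynomial ℕ K) • v (i + 1) := by
  apply derivation_ext
  intro n
  rw [hv i hi n]
  rw [Derivation.add_apply, Derivation.smul_apply, smul_eq_mul, pderiv_X, Pi.single_apply]
  by_cases h : i = n
  · simp [h]
  · rw [if_neg h, if_neg (Ne.symm h)]

omit hv in
private lemma pivot_v_pderivX (j : ℕ) (_hj : 1 ≤ j) (i n : ℕ) :
    v j (pderiv i (X n)) = 0 := by
  rw [pderiv_X, Pi.single_apply]
  split_ifs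
  · exact Derivation.map_one_eq_zero _
  · exact map_zero _

private lemma pivot_lie_pderiv_succ {i : ℕ} (hi : 1 ≤ i) :
    ⁅(pderiv i : Derivation K (MvPolynomial ℕ K) (MvPolynomial ℕ K)), v (i + 1)⁆ = v (i + 2) := by
  apply derivation_ext
  intro n
  rw [Derivation.commutator_apply, pivot_v_pderivX v (i + 1) (by omega) i n, sub_zero,
    hv (i + 1) (by omega) n, map_add]
  have h0 : pderiv i ((if i + 1 = n then 1 else 0 : MvPolynomial ℕ K)) = 0 := by
    split_ifs
    · exact pderiv_one
    · exact map_zero _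
  rw [h0, zero_add, Derivation.leibniz, smul_eq_mul, smul_eq_mul,
    show i + 1 - 1 = i from rfl, pderiv_X_self,
    pivot_pderiv_v v hv (by omega : i + 2 ≤ i + 2) n, show i + 1 + 1 = i + 2 from rfl]
  ring

private lemma pivot_lie_pderiv_far {i j : ℕ} (hij : i + 2 ≤ j) :
    ⁅(pderiv i : Derivation K (MvPolynomial ℕ K) (MvPolynomial ℕ K)), v j⁆ = 0 := by
  apply derivation_ext
  intro n
  rw [Derivation.commutator_apply, pivot_v_pderivX v j (by omega) i n, sub_zero,
    pivot_pderiv_v v hv hij n, Derivation.zero_apply]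

omit hv

private lemma pivot_add_lie {A : Type*} [CommRing A] [Algebra K A]
    (D E F : Derivation K A A) :
    ⁅D + E, F⁆ = ⁅D, F⁆ + ⁅E, F⁆ := by
  ext a
  simp only [Derivation.commutator_apply, Derivation.add_apply, map_add]
  ring

private lemma pivot_lie_self {A : Type*} [CommRing A] [Algebra K A] (D : Derivation K A A) :
    ⁅D, D⁆ = 0 := by
  ext a
  simp [Derivation.commutator_apply]

private lemma pivot_lie_smul_left {A : Type*} [CommRing A] [Algebra K A]
    (f : A) (D E : Derivation K A A) :
    ⁅f • D, E⁆ = f • ⁅D, E⁆ - (E f) • D := by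
  ext a
  simp only [Derivation.commutator_apply, Derivation.sub_apply, Derivation.smul_apply,
    smul_eq_mul, Derivation.leibniz, map_smul]
  ring

end PivotAux

/-- In `Der K[t₀,t₁,…]`, the pivot special derivations `v_i = ∂_i + t_{i−1} v_{i+1}`
satisfy `[v_i, v_j] = t_{i−1} t_i ⋯ t_{j−3} v_{j+1}` for all `1 ≤ i < j`,
the product of `t`'s being `1` when `i − 1 > j − 3`. -/
theorem pivot_bracket_general (K : Type*) [Field K]
    (v : ℕ → Derivation K (MvPolynomial ℕ K) (MvPolynomial ℕ K))
    (hv : ∀ i, 1 ≤ i → ∀ j : ℕ,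
      v i (X j) = (if i = j then 1 else 0) + X (i - 1) * v (i + 1) (X j)) :
    ∀ i j : ℕ, 1 ≤ i → i < j →
      ⁅v i, v j⁆ = ((∏ k ∈ Finset.Ico (i - 1) (j - 2), X k : MvPolynomial ℕ K)) • v (j + 1) := by
  have main : ∀ d i, 1 ≤ i →
      ⁅v i, v (i + 1 + d)⁆
        = ((∏ k ∈ Finset.Ico (i - 1) (i + 1 + d - 2), X k : MvPolynomial ℕ K))
            • v (i + 1 + d + 1) := by
    intro d
    induction d with
    | zero =>
      intro i hi
      rw [pivot_v_eq v hv hi, pivot_add_lie, pivot_lie_pderiv_succ v hv hi,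
        pivot_lie_smul_left, pivot_lie_self, smul_zero, zero_sub,
        pivot_vX_zero v hv (by omega : 1 ≤ i + 1) (by omega : i - 1 < i + 1),
        zero_smul, neg_zero, add_zero,
        show i + 1 + 0 - 2 = i - 1 by omega, Finset.Ico_self, Finset.prod_empty, one_smul]
    | succ d ih =>
      intro i hi
      have hj2 : i + 2 ≤ i + 1 + (d + 1) := by omega
      rw [pivot_v_eq v hv hi, pivot_add_lie, pivot_lie_pderiv_far v hv hj2,
        pivot_lie_smul_left,
        pivot_vX_zero v hv (by omega : 1 ≤ i + 1 + (d + 1)) (by omega),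
        zero_smul, sub_zero, zero_add]
      have hih := ih (i + 1) (by omega)
      rw [show i + 1 + 1 + d = i + 1 + (d + 1) by omega,
        show i + 1 - 1 = i from rfl] at hih
      rw [hih, smul_smul]
      congr 1
      rw [Finset.prod_eq_prod_Ico_succ_bot (by omega : i - 1 < i + 1 + (d + 1) - 2)
          (fun k => (X k : MvPolynomial ℕ K)),
        show i - 1 + 1 = i by omega]
  intro i j hi hij
  have h := main (j - i - 1) i hi
  rw [show i + 1 + (j - i - 1) = j by omega] at h
  exact h
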